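/- arXiv:1307.6248 — 3 statements merged into one kernel-verified Lean document; each statement's English description precedes it below -/
import Mathlib

section
/- In the category of presheaves of sets on a small category, consider a commutative cube whose bottom face is a pushout along a monomorphism A ↪ B, and whose left and back faces are pullbacks. Then the top face is a pushout if and only if the front and right faces are pullbacks. -/
open CategoryTheory Limits

universe u

/-- Adhesivity of presheaf categories: given a commutative cube in `Set^{Cᵒᵖ}` whose
bottom face is a pushout along a monomorphism `ab : A ⟶ B`, and whose left face
`(X, Y, A, B)` and back face `(X, Z, A, C)` are pullbacks, the top face is a pushout if
and only if the front face `(Y, W, B, D)` and the right face `(Z, W, C, D)` are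
pullbacks. -/
theorem stmt2 {C : Type u} [SmallCategory C]
    {A B Cc D X Y Z W : Cᵒᵖ ⥤ Type u}
    (ab : A ⟶ B) (ac : A ⟶ Cc) (bd : B ⟶ D) (cd : Cc ⟶ D)
    (xy : X ⟶ Y) (xz : X ⟶ Z) (yw : Y ⟶ W) (zw : Z ⟶ W)
    (xa : X ⟶ A) (yb : Y ⟶ B) (zc : Z ⟶ Cc) (wd : W ⟶ D)
    [Mono ab]
    (hbot : IsPushout ab ac bd cd)
    (hleft : IsPullback xy xa yb ab)
    (hback : IsPullback xz xa zc ac)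
    (htop : xy ≫ yw = xz ≫ zw)
    (hfront : yw ≫ wd = yb ≫ bd)
    (hright : zw ≫ wd = zc ≫ cd) :
    IsPushout xy xz yw zw ↔
      (IsPullback yw yb wd bd ∧ IsPullback zw zc wd cd) := by
  exact (Adhesive.van_kampen hbot) xy xz yw zw xa yb zc wd hleft hback ⟨hfront⟩ ⟨hright⟩ ⟨htop⟩
end

section
/- Let κ be an inaccessible cardinal and let p : E → B be a κ-small function of sets. Then for any set B' and function g : B' → B, if g is κ-small then the pullback E ×_B B' → B' is κ-small; moreover, if f : A → B is κ-small, then the 'dependent product' Π_f(p), whose fiber over b ∈ B is the set of sections over f⁻¹(b) of the pullback of p, is also κ-small. -/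
open Cardinal

/-- A function is `κ`-small if all of its fibers have cardinality less than `κ`. -/
def KappaSmall {X Y : Type u} (κ : Cardinal.{u}) (h : X → Y) : Prop :=
  ∀ y : Y, #{x : X // h x = y} < κ

lemma aux_power_lt {κ a b : Cardinal.{u}} (hκ : κ.IsInaccessible)
    (ha : a < κ) (hb : b < κ) : a ^ b < κ := by
  calc a ^ b ≤ (2 ^ a) ^ b := power_le_power_right (cantor a).le
    _ = 2 ^ (a * b) := by rw [← power_mul]
    _ < κ := hκ.isStrongLimit.two_power_lt (mul_lt_of_lt hκ.1.le ha hb)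

lemma aux_prod_lt {κ : Cardinal.{u}} (hκ : κ.IsInaccessible) {ι : Type u}
    (hι : #ι < κ) {c : ι → Cardinal.{u}} (hc : ∀ i, c i < κ) : prod c < κ := by
  have hsup : (⨆ i, c i) < κ := iSup_lt_of_isRegular hκ.isRegular hι hc
  calc prod c ≤ prod (fun _ : ι => ⨆ i, c i) :=
        prod_le_prod _ _ fun i => le_ciSup (bddAbove_range _) i
    _ = (⨆ i, c i) ^ #ι := prod_const' _ _
    _ < κ := aux_power_lt hκ hsup hι

/-- Let `κ` be inaccessible and `p : E → B` a `κ`-small function of sets.  Then: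
(1) for any `κ`-small `g : B' → B`, the pullback `E ×_B B' → B'` is `κ`-small; and
(2) for any `κ`-small `f : A → B` and any `κ`-small `p' : E' → A`, the dependent product
`Π_f(p')`, whose fiber over `b` consists of the sections over `f⁻¹(b)` of `p'`, is
`κ`-small. -/
theorem stmt5 {E B : Type u} (κ : Cardinal.{u}) (hκ : κ.IsInaccessible)
    (p : E → B) (hp : KappaSmall κ p) :
    (∀ (B' : Type u) (g : B' → B), KappaSmall κ g →
      KappaSmall κ (fun x : {y : E × B' // p y.1 = g y.2} => x.1.2)) ∧
    (∀ (A : Type u) (f : A → B), KappaSmall κ f →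
      ∀ (E' : Type u) (p' : E' → A), KappaSmall κ p' →
        ∀ b : B, #{s : {a : A // f a = b} → E' // ∀ a, p' (s a) = a.1} < κ) := by
  constructor
  · intro B' g _ b'
    have e : {x : {y : E × B' // p y.1 = g y.2} // x.1.2 = b'} ≃ {e : E // p e = g b'} :=
      { toFun := fun x => ⟨x.1.1.1, by rw [x.1.2, x.2]⟩
        invFun := fun e => ⟨⟨⟨e.1, b'⟩, e.2⟩, rfl⟩
        left_inv := fun x => by
          ext
          · rfl
          · exact x.2.symm
        right_inv := fun e => rfl }
    rw [Cardinal.mk_congr e]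
    exact hp (g b')
  · intro A f hf E' p' hp' b
    have hinj : #{s : {a : A // f a = b} → E' // ∀ a, p' (s a) = a.1} ≤
        #(∀ a : {a : A // f a = b}, {e : E' // p' e = a.1}) := by
      apply mk_le_of_injective (f := fun s a => (⟨s.1 a, s.2 a⟩ :
        {e : E' // p' e = a.1}))
      intro s t h
      ext a
      exact congrArg Subtype.val (congrFun h a)
    refine hinj.trans_lt ?_
    rw [mk_pi]
    exact aux_prod_lt hκ (hf b) fun a => hp' a.1
end

section
/- Let λ be a limit ordinal and suppose given, in the category of presheaves of sets on a small category, a λ-indexed transfinite sequence of monomorphisms A₀ ↪ A₁ ↪ ⋯ with colimit A_λ, together with a compatible sequence of objects X_α over A_α such that for all α < β < λ the square (X_α, X_β, A_α, A_β) is a pullback. If for each α < λ the square (X_α, colim X, A_α, A_λ) is a pullback, then the top row X₀ → X₁ → ⋯ has colimit equal to the given cocone, and conversely: the top row is a colimit diagram if and only if all squares over the colimit are pullbacks. -/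
open CategoryTheory Limits

universe u

section Aux

lemma pb_exists {P Xt Yt Zt : Type u} {fst : P ⟶ Xt} {snd : P ⟶ Yt} {f : Xt ⟶ Zt} {g : Yt ⟶ Zt}
    (h : IsPullback fst snd f g) (x : Xt) (y : Yt) (hxy : f x = g y) :
    ∃ p, fst p = x ∧ snd p = y := by
  let e := PullbackCone.IsLimit.equivPullbackObj h.isLimit
  refine ⟨e.symm ⟨⟨x, y⟩, hxy⟩, ?_, ?_⟩
  · exact PullbackCone.IsLimit.equivPullbackObj_symm_apply_fst h.isLimit _
  · exact PullbackCone.IsLimit.equivPullbackObj_symm_apply_snd h.isLimit _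

lemma pb_inj {P Xt Yt Zt : Type u} {fst : P ⟶ Xt} {snd : P ⟶ Yt} {f : Xt ⟶ Zt} {g : Yt ⟶ Zt}
    (h : IsPullback fst snd f g) {p p' : P} (h1 : fst p = fst p') (h2 : snd p = snd p') :
    p = p' :=
  PullbackCone.IsLimit.type_ext h.isLimit h1 h2

lemma hom_eq {J : Type u} [Preorder J] {a b : J} (u v : a ⟶ b) : u = v := by
  obtain ⟨⟨u⟩⟩ := u; obtain ⟨⟨v⟩⟩ := v; rfl

theorem typeStmt {J : Type u} [LinearOrder J] [Nonempty J]
    (A X : J ⥤ Type u)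
    (hmono : ∀ (α β : J) (h : α ⟶ β), Function.Injective (A.map h))
    (q : X ⟶ A)
    (hpb : ∀ (α β : J) (h : α ⟶ β),
      IsPullback (X.map h) (q.app α) (q.app β) (A.map h))
    (c : Cocone A) (hc : IsColimit c)
    (cX : Cocone X) (f : cX.pt ⟶ c.pt)
    (hover : ∀ α : J, cX.ι.app α ≫ f = q.app α ≫ c.ι.app α) :
    Nonempty (IsColimit cX) ↔
      ∀ α : J, IsPullback (cX.ι.app α) (q.app α) f (c.ι.app α) := by
  have hcinj : ∀ α, Function.Injective (c.ι.app α) := by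
    intro α a b hab
    obtain ⟨k, g, g', hk⟩ := (Types.FilteredColimit.isColimit_eq_iff A hc).mp hab
    obtain rfl : g = g' := hom_eq _ _
    exact hmono α k g hk
  constructor
  · rintro ⟨hL⟩ α
    have w : (cX.ι.app α) ≫ f = (q.app α) ≫ (c.ι.app α) := hover α
    refine IsPullback.of_isLimit (c := PullbackCone.mk _ _ w)
      ((PullbackCone.isLimitEquivBijective _).symm ⟨?_, ?_⟩)
    · -- injective
      intro x₁ x₂ h12
      have h1 : cX.ι.app α x₁ = cX.ι.app α x₂ := congrArg (fun p => p.1.1) h12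
      have h2 : q.app α x₁ = q.app α x₂ := congrArg (fun p => p.1.2) h12
      obtain ⟨k, g, g', hk⟩ := (Types.FilteredColimit.isColimit_eq_iff X hL).mp h1
      obtain rfl : g = g' := hom_eq _ _
      exact pb_inj (hpb α k g) hk h2
    · -- surjective
      rintro ⟨⟨x, a⟩, (hxa : f x = c.ι.app α a)⟩
      obtain ⟨β, y, hy⟩ := Types.jointly_surjective X hL x
      have h1 : c.ι.app β (q.app β y) = c.ι.app α a := by
        have h := ConcreteCategory.congr_hom (hover β) y
        simp only [types_comp_apply] at h
        rw [← h, hy, hxa]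
      obtain ⟨k, g, g', hk⟩ := (Types.FilteredColimit.isColimit_eq_iff A hc).mp h1
      have hq : q.app k (X.map g y) = A.map g' a := by
        have h := ConcreteCategory.congr_hom (q.naturality g) y
        simp only [types_comp_apply] at h
        rw [← hk, ← h]
      obtain ⟨z, hz1, hz2⟩ := pb_exists (hpb α k g') (X.map g y) a hq
      refine ⟨z, ?_⟩
      have : cX.ι.app α z = x := by
        have h1 := ConcreteCategory.congr_hom (cX.w g') z
        have h2 := ConcreteCategory.congr_hom (cX.w g) y
        simp only [types_comp_apply] at h1 h2
        rw [← h1, hz1, h2, hy]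
      exact Subtype.ext (Prod.ext this hz2)
  · intro hP
    refine ⟨Types.FilteredColimit.isColimitOf X cX ?_ ?_⟩
    · intro x
      obtain ⟨α, a, ha⟩ := Types.jointly_surjective A hc (f x)
      obtain ⟨p, hp1, hp2⟩ := pb_exists (hP α) x a ha.symm
      exact ⟨α, p, hp1.symm⟩
    · intro i j xi xj hij
      refine ⟨max i j, homOfLE (le_max_left i j), homOfLE (le_max_right i j), ?_⟩
      set k := max i j
      set gi : i ⟶ k := homOfLE (le_max_left i j)
      set gj : j ⟶ k := homOfLE (le_max_right i j)
      have e1 : cX.ι.app k (X.map gi xi) = cX.ι.app k (X.map gj xj) := by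
        have h1 := ConcreteCategory.congr_hom (cX.w gi) xi
        have h2 := ConcreteCategory.congr_hom (cX.w gj) xj
        simp only [types_comp_apply] at h1 h2
        rw [h1, h2, hij]
      have e2 : q.app k (X.map gi xi) = q.app k (X.map gj xj) := by
        apply hcinj k
        have h1 := ConcreteCategory.congr_hom (hover k) (X.map gi xi)
        have h2 := ConcreteCategory.congr_hom (hover k) (X.map gj xj)
        simp only [types_comp_apply] at h1 h2
        rw [← h1, ← h2, e1]
      exact pb_inj (hP k) e1 e2

end Aux

/-- Exhaustivity of presheaf categories: let `lam` be a limit ordinal, `A` a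
`lam`-indexed transfinite sequence of monomorphisms of presheaves of sets on a small
category `C` with colimit cocone `c`, and `q : X ⟶ A` a compatible sequence of objects
over the `A α` such that for all `α ≤ β` the square `(X α, X β, A α, A β)` is a
pullback.  Given a cocone `cX` on `X` lying over `c` via `f : cX.pt ⟶ c.pt`, the cocone
`cX` is a colimit if and only if for every `α` the square `(X α, cX.pt, A α, c.pt)` is a
pullback. -/
theorem stmt18 {C : Type u} [SmallCategory C] (lam : Ordinal.{u}) (hlam : Order.IsSuccLimit lam)
    (A X : lam.ToType ⥤ (Cᵒᵖ ⥤ Type u))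
    (hmono : ∀ (α β : lam.ToType) (h : α ⟶ β), Mono (A.map h))
    (q : X ⟶ A)
    (hpb : ∀ (α β : lam.ToType) (h : α ⟶ β),
      IsPullback (X.map h) (q.app α) (q.app β) (A.map h))
    (c : Cocone A) (hc : IsColimit c)
    (cX : Cocone X) (f : cX.pt ⟶ c.pt)
    (hover : ∀ α : lam.ToType, cX.ι.app α ≫ f = q.app α ≫ c.ι.app α) :
    Nonempty (IsColimit cX) ↔
      ∀ α : lam.ToType, IsPullback (cX.ι.app α) (q.app α) f (c.ι.app α) := by
  haveI : Nonempty lam.ToType := Ordinal.toType_nonempty_iff_ne_zero.mpr hlam.ne_bot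
  have key : ∀ (k : Cᵒᵖ), Nonempty (IsColimit (((evaluation Cᵒᵖ (Type u)).obj k).mapCocone cX)) ↔
      ∀ α : lam.ToType, IsPullback ((cX.ι.app α).app k) ((q.app α).app k)
        (f.app k) ((c.ι.app α).app k) := by
    intro k
    let F := (evaluation Cᵒᵖ (Type u)).obj k
    exact typeStmt (A ⋙ F) (X ⋙ F)
      (fun α β h => by
        rw [← CategoryTheory.mono_iff_injective]
        show Mono ((A.map h).app k)
        infer_instance)
      (Functor.whiskerRight q F)
      (fun α β h => (hpb α β h).map F)
      (F.mapCocone c) (isColimitOfPreserves F hc)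
      (F.mapCocone cX) (f.app k)
      (fun α => congr_app (hover α) k)
  constructor
  · rintro ⟨hL⟩ α
    have hPk : ∀ k : Cᵒᵖ, IsPullback ((cX.ι.app α).app k) ((q.app α).app k)
        (f.app k) ((c.ι.app α).app k) := fun k =>
      (key k).mp ⟨isColimitOfPreserves ((evaluation Cᵒᵖ (Type u)).obj k) hL⟩ α
    refine IsPullback.of_isLimit (c := PullbackCone.mk _ _ (hover α))
      (evaluationJointlyReflectsLimits _ fun k => ?_)
    exact (isLimitMapConePullbackConeEquiv ((evaluation Cᵒᵖ (Type u)).obj k) (hover α)).symm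
      (hPk k).isLimit
  · intro hP
    have : ∀ k : Cᵒᵖ, IsColimit (((evaluation Cᵒᵖ (Type u)).obj k).mapCocone cX) := fun k =>
      ((key k).mpr (fun α => (hP α).map ((evaluation Cᵒᵖ (Type u)).obj k))).some
    exact ⟨evaluationJointlyReflectsColimits _ this⟩
end
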